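/- For all real λ > 0, β > 0, α > 0, λ₁ > 0, t > 0 and every integer k ≥ 1, the integral ∫₀^∞ e^{-λ₁ s} ((λ₁ s)^k / k!) · e^{-λ t - β s} · s^{-1} · Φ(α, 0, λ t (β s)^α) ds equals (e^{-λ t} / k!) · (λ₁^k / (λ₁ + β)^k) · Σ_{n=1}^∞ (λ t β^α)^n Γ(α n + k) / ((λ₁ + β)^{α n} · n! · Γ(α n)). (This is the probability that a Poisson process of intensity λ₁, time-changed by an independent compound Poisson–Gamma subordinator with parameters λ, α, β, equals k.) -/

import Mathlib

open Real MeasureTheory Filter Finset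

/-- Wright function `Φ(ρ, δ, z) = Σ_{j≥0} z^j / (j! Γ(ρ j + δ))`. -/
noncomputable def wright (ρ δ z : ℝ) : ℝ :=
  ∑' j : ℕ, z ^ j / ((Nat.factorial j : ℝ) * Real.Gamma (ρ * (j : ℝ) + δ))

/-- Wright function with second parameter 0:
`Φ(ρ, 0, z) = Σ_{j≥1} z^j / (j! Γ(ρ j))`. -/
noncomputable def wright0 (ρ z : ℝ) : ℝ :=
  ∑' j : ℕ, z ^ (j + 1) /
    ((Nat.factorial (j + 1) : ℝ) * Real.Gamma (ρ * ((j : ℝ) + 1)))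

/-- Two-parameter Mittag-Leffler function `E_{ρ,δ}(z) = Σ_{j≥0} z^j / Γ(ρ j + δ)`. -/
noncomputable def ml2 (ρ δ z : ℝ) : ℝ :=
  ∑' j : ℕ, z ^ j / Real.Gamma (ρ * (j : ℝ) + δ)

/-- Three-parameter generalized Mittag-Leffler function
`E^γ_{ρ,δ}(z) = Σ_{j≥0} (Γ(γ+j)/Γ(γ)) z^j / (j! Γ(ρ j + δ))`. -/
noncomputable def ml3 (γ ρ δ z : ℝ) : ℝ :=
  ∑' j : ℕ, (Real.Gamma (γ + (j : ℝ)) / Real.Gamma γ) * z ^ j /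
    ((Nat.factorial j : ℝ) * Real.Gamma (ρ * (j : ℝ) + δ))

/-- Modified Bessel function of the first kind of order 0:
`I₀(z) = Σ_{j≥0} (z/2)^{2j} / (j!)²`. -/
noncomputable def besselI0 (z : ℝ) : ℝ :=
  ∑' j : ℕ, (z / 2) ^ (2 * j) / ((Nat.factorial j : ℝ) * (Nat.factorial j : ℝ))

/-- pmf of a Poisson process time-changed by an independent
compound Poisson–Gamma subordinator, for `k ≥ 1`. -/

lemma one_le_mul_mul_Gamma {x : ℝ} (hx : 0 < x) : 1 ≤ x * (x + 1) * Real.Gamma x := by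
  have h2 : Real.Gamma (x + 2) = (x + 1) * (x * Real.Gamma x) := by
    rw [show x + 2 = (x + 1) + 1 by ring, Real.Gamma_add_one (by positivity),
      Real.Gamma_add_one hx.ne']
  have h3 : (1 : ℝ) ≤ Real.Gamma (x + 2) := by
    have := Real.Gamma_strictMonoOn_Ici.monotoneOn (Set.mem_Ici.2 le_rfl)
      (Set.mem_Ici.2 (by linarith : (2:ℝ) ≤ x + 2)) (by linarith)
    simpa [Real.Gamma_two] using this
  nlinarith [h2, h3]

lemma summable_wright0_terms {α : ℝ} (hα : 0 < α) {z : ℝ} (hz : 0 ≤ z) :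
    Summable (fun j : ℕ => z ^ (j + 1) /
      ((Nat.factorial (j + 1) : ℝ) * Real.Gamma (α * ((j : ℝ) + 1)))) := by
  have hcomp : Summable (fun j : ℕ => (α + 1) ^ 2 * ((4 * z) ^ (j + 1) / (Nat.factorial (j + 1) : ℝ))) :=
    ((summable_nat_add_iff 1).2 (Real.summable_pow_div_factorial (4 * z))).mul_left _
  refine Summable.of_nonneg_of_le (fun j => ?_) (fun j => ?_) hcomp
  · have hx : 0 < α * ((j : ℝ) + 1) := by positivity
    have := Real.Gamma_pos_of_pos hx
    positivity
  · set x := α * ((j : ℝ) + 1) with hxdef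
    have hx : 0 < x := by positivity
    have hG : 0 < Real.Gamma x := Real.Gamma_pos_of_pos hx
    have h1 : (Real.Gamma x)⁻¹ ≤ x * (x + 1) := by
      rw [inv_le_iff_one_le_mul₀ hG]
      exact one_le_mul_mul_Gamma hx
    have hn2 : ((j : ℝ) + 1) ^ 2 ≤ 4 ^ (j + 1) := by
      have h2 : ((j : ℝ) + 1) ≤ 2 ^ (j + 1) := by
        exact_mod_cast (Nat.lt_two_pow_self (n := j + 1)).le
      calc ((j:ℝ)+1)^2 ≤ ((2:ℝ) ^ (j+1))^2 := by
            apply pow_le_pow_left₀ (by positivity) h2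
        _ = 4 ^ (j+1) := by rw [← pow_mul, mul_comm, pow_mul]; norm_num
    have h2 : x * (x + 1) ≤ (α + 1) ^ 2 * 4 ^ (j + 1) := by
      have hj0 : (0:ℝ) ≤ (j:ℝ) := Nat.cast_nonneg j
      have hj1 : (1:ℝ) ≤ (j:ℝ) + 1 := by linarith
      have ha : x ≤ (α + 1) * ((j:ℝ)+1) := by rw [hxdef]; nlinarith
      have hb : x + 1 ≤ (α + 1) * ((j:ℝ)+1) := by rw [hxdef]; nlinarith
      calc x * (x+1) ≤ ((α+1)*((j:ℝ)+1)) * ((α+1)*((j:ℝ)+1)) := by nlinarith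
        _ = (α+1)^2 * ((j:ℝ)+1)^2 := by ring
        _ ≤ (α+1)^2 * 4 ^ (j+1) := by nlinarith
    calc z ^ (j+1) / ((Nat.factorial (j+1) : ℝ) * Real.Gamma x)
        = z ^ (j+1) / (Nat.factorial (j+1) : ℝ) * (Real.Gamma x)⁻¹ := by
          rw [div_mul_eq_div_div, div_eq_mul_inv]
      _ ≤ z ^ (j+1) / (Nat.factorial (j+1) : ℝ) * ((α+1)^2 * 4 ^ (j+1)) := by
          apply mul_le_mul_of_nonneg_left (h1.trans h2) (by positivity)
      _ = (α+1)^2 * ((4*z) ^ (j+1) / (Nat.factorial (j+1) : ℝ)) := by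
          rw [mul_pow]; ring


lemma integral_tsum_eq_of_nonneg {g : ℕ → ℝ → ℝ} (hm : ∀ j, Measurable (g j))
    (hnn : ∀ j, ∀ s ∈ Set.Ioi (0 : ℝ), 0 ≤ g j s)
    (hsum : ∀ s ∈ Set.Ioi (0 : ℝ), Summable fun j => g j s)
    (hi : ∀ j, IntegrableOn (g j) (Set.Ioi 0)) :
    ∫ s in Set.Ioi (0 : ℝ), ∑' j, g j s = ∑' j, ∫ s in Set.Ioi (0 : ℝ), g j s := by
  have hnn' : ∀ j, 0 ≤ᵐ[volume.restrict (Set.Ioi (0:ℝ))] g j := fun j =>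
    (ae_restrict_iff' measurableSet_Ioi).2 (.of_forall (hnn j))
  have hint : ∀ j, ∫⁻ s in Set.Ioi (0:ℝ), ENNReal.ofReal (g j s) =
      ENNReal.ofReal (∫ s in Set.Ioi (0:ℝ), g j s) := fun j =>
    (ofReal_integral_eq_lintegral_ofReal (hi j) (hnn' j)).symm
  have hH : Measurable fun s => ∑' j, ENNReal.ofReal (g j s) :=
    Measurable.ennreal_tsum fun j => (hm j).ennreal_ofReal
  have heq1 : ∀ s ∈ Set.Ioi (0:ℝ), (∑' j, ENNReal.ofReal (g j s)).toReal = ∑' j, g j s := by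
    intro s hs'
    rw [← ENNReal.ofReal_tsum_of_nonneg (fun j => hnn j s hs') (hsum s hs'),
      ENNReal.toReal_ofReal (tsum_nonneg fun j => hnn j s hs')]
  calc ∫ s in Set.Ioi (0:ℝ), ∑' j, g j s
      = ∫ s in Set.Ioi (0:ℝ), (∑' j, ENNReal.ofReal (g j s)).toReal :=
        (setIntegral_congr_fun measurableSet_Ioi (fun s hs' => (heq1 s hs').symm)).symm ▸ rfl
    _ = (∫⁻ s in Set.Ioi (0:ℝ), ENNReal.ofReal ((∑' j, ENNReal.ofReal (g j s)).toReal)).toReal := by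
        rw [integral_eq_lintegral_of_nonneg_ae (.of_forall fun s => ENNReal.toReal_nonneg)
          hH.ennreal_toReal.aestronglyMeasurable]
    _ = (∫⁻ s in Set.Ioi (0:ℝ), ∑' j, ENNReal.ofReal (g j s)).toReal := by
        congr 1
        refine setLIntegral_congr_fun measurableSet_Ioi (fun s hs' => ?_)
        rw [← ENNReal.ofReal_tsum_of_nonneg (fun j => hnn j s hs') (hsum s hs'),
          ENNReal.ofReal_toReal ENNReal.ofReal_ne_top]
    _ = (∑' j, ∫⁻ s in Set.Ioi (0:ℝ), ENNReal.ofReal (g j s)).toReal := by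
        rw [lintegral_tsum fun j => ((hm j).ennreal_ofReal).aemeasurable]
    _ = (∑' j, ENNReal.ofReal (∫ s in Set.Ioi (0:ℝ), g j s)).toReal := by simp_rw [hint]
    _ = ∑' j, ∫ s in Set.Ioi (0:ℝ), g j s := by
        rw [ENNReal.tsum_toReal_eq fun j => ENNReal.ofReal_ne_top]
        exact tsum_congr fun j =>
          ENNReal.toReal_ofReal (setIntegral_nonneg measurableSet_Ioi (hnn j))

theorem stmt0 (lam β α lam1 t : ℝ) (hlam : 0 < lam) (hβ : 0 < β) (hα : 0 < α)
    (hlam1 : 0 < lam1) (ht : 0 < t) (k : ℕ) (hk : 1 ≤ k) :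
    (∫ s in Set.Ioi (0 : ℝ),
      Real.exp (-(lam1 * s)) * ((lam1 * s) ^ k / (Nat.factorial k : ℝ)) *
        (Real.exp (-(lam * t) - β * s) * s⁻¹ * wright0 α (lam * t * (β * s) ^ α)))
    = (Real.exp (-(lam * t)) / (Nat.factorial k : ℝ)) *
        (lam1 ^ k / (lam1 + β) ^ k) *
        ∑' n : ℕ, (lam * t * β ^ α) ^ (n + 1) *
            Real.Gamma (α * ((n : ℝ) + 1) + (k : ℝ)) /
          ((lam1 + β) ^ (α * ((n : ℝ) + 1)) * (Nat.factorial (n + 1) : ℝ) *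
            Real.Gamma (α * ((n : ℝ) + 1))) := by
  have hb : (0:ℝ) < lam1 + β := by linarith
  have hk1 : (1:ℝ) ≤ (k:ℝ) := by exact_mod_cast hk
  have hβα : (0:ℝ) < β ^ α := Real.rpow_pos_of_pos hβ α
  set C : ℕ → ℝ := fun j =>
    Real.exp (-(lam * t)) * lam1 ^ k / (Nat.factorial k : ℝ) * (lam * t * β ^ α) ^ (j + 1) /
      ((Nat.factorial (j + 1) : ℝ) * Real.Gamma (α * ((j : ℝ) + 1))) with hC
  set g : ℕ → ℝ → ℝ := fun j s =>
    C j * (s ^ (α * ((j : ℝ) + 1) + (k:ℝ) - 1) * Real.exp (-((lam1 + β) * s))) with hg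
  have hApos : ∀ j : ℕ, (0:ℝ) < α * ((j : ℝ) + 1) := fun j => by positivity
  have hCpos : ∀ j, 0 < C j := by
    intro j
    have h1 := Real.Gamma_pos_of_pos (hApos j)
    have h2 : (0:ℝ) < lam * t * β ^ α := by positivity
    rw [hC]
    positivity
  -- the pointwise factorization
  have key : ∀ s ∈ Set.Ioi (0:ℝ), ∀ j : ℕ,
      (Real.exp (-(lam1 * s)) * ((lam1 * s) ^ k / (Nat.factorial k : ℝ)) *
        (Real.exp (-(lam * t) - β * s) * s⁻¹)) *
      ((lam * t * (β * s) ^ α) ^ (j + 1) /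
        ((Nat.factorial (j + 1) : ℝ) * Real.Gamma (α * ((j : ℝ) + 1)))) = g j s := by
    intro s hs j
    have hs0 : (0:ℝ) < s := hs
    have h1 : (β * s) ^ α = β ^ α * s ^ α := Real.mul_rpow hβ.le hs0.le
    have h2 : (s ^ α) ^ (j + 1) = s ^ (α * ((j:ℝ) + 1)) := by
      rw [← Real.rpow_natCast (s ^ α) (j + 1), ← Real.rpow_mul hs0.le]
      push_cast
      ring_nf
    have h3 : s ^ k = s ^ ((k : ℝ)) := (Real.rpow_natCast s k).symm
    have h4 : s⁻¹ = s ^ (-1 : ℝ) := (Real.rpow_neg_one s).symm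
    have h6 : s ^ (α * ((j:ℝ) + 1) + (k:ℝ) - 1) =
        s ^ ((k : ℝ)) * s ^ (α * ((j:ℝ) + 1)) * s ^ (-1 : ℝ) := by
      rw [← Real.rpow_add hs0, ← Real.rpow_add hs0]
      congr 1
      ring
    have h7 : Real.exp (-((lam1 + β) * s)) =
        Real.exp (-(lam1 * s)) * Real.exp (-(β * s)) := by
      rw [← Real.exp_add]
      exact congrArg Real.exp (by ring)
    have h8 : Real.exp (-(lam * t) - β * s) =
        Real.exp (-(lam * t)) * Real.exp (-(β * s)) := by
      rw [← Real.exp_add]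
      exact congrArg Real.exp (by ring)
    have hfac : (0:ℝ) < (Nat.factorial (j+1) : ℝ) := by positivity
    have hfack : (0:ℝ) < (Nat.factorial k : ℝ) := by positivity
    have hG := Real.Gamma_pos_of_pos (hApos j)
    rw [hg]
    simp only [hC]
    rw [h1, h8, h7, h6]
    rw [show lam * t * (β ^ α * s ^ α) = lam * t * β ^ α * s ^ α by ring, mul_pow _ (s ^ α), h2,
      mul_pow lam1 s, h3, h4]
    field_simp
  have hFeq : Set.EqOn
      (fun s => Real.exp (-(lam1 * s)) * ((lam1 * s) ^ k / (Nat.factorial k : ℝ)) *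
        (Real.exp (-(lam * t) - β * s) * s⁻¹ * wright0 α (lam * t * (β * s) ^ α)))
      (fun s => ∑' j, g j s) (Set.Ioi 0) := by
    intro s hs
    have hs0 : (0:ℝ) < s := hs
    simp only
    calc Real.exp (-(lam1 * s)) * ((lam1 * s) ^ k / (Nat.factorial k : ℝ)) *
          (Real.exp (-(lam * t) - β * s) * s⁻¹ * wright0 α (lam * t * (β * s) ^ α))
        = (Real.exp (-(lam1 * s)) * ((lam1 * s) ^ k / (Nat.factorial k : ℝ)) *
            (Real.exp (-(lam * t) - β * s) * s⁻¹)) * wright0 α (lam * t * (β * s) ^ α) := by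
          ring
      _ = ∑' j, g j s := by
          rw [wright0, ← tsum_mul_left]
          exact tsum_congr fun j => key s hs j
  have hz : ∀ s ∈ Set.Ioi (0:ℝ), (0:ℝ) ≤ lam * t * (β * s) ^ α := by
    intro s hs
    have hs0 : (0:ℝ) < s := hs
    positivity
  have hsum : ∀ s ∈ Set.Ioi (0:ℝ), Summable fun j => g j s := by
    intro s hs
    exact ((summable_wright0_terms hα (hz s hs)).mul_left
      (Real.exp (-(lam1 * s)) * ((lam1 * s) ^ k / (Nat.factorial k : ℝ)) *
        (Real.exp (-(lam * t) - β * s) * s⁻¹))).congr (fun j => key s hs j)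
  have hnn : ∀ j, ∀ s ∈ Set.Ioi (0:ℝ), 0 ≤ g j s := by
    intro j s hs
    have hs0 : (0:ℝ) < s := hs
    have := hCpos j
    rw [hg]
    positivity
  have hm : ∀ j, Measurable (g j) := by
    intro j
    rw [hg]
    fun_prop
  have hi : ∀ j, IntegrableOn (g j) (Set.Ioi 0) := by
    intro j
    have h0 : IntegrableOn
        (fun s : ℝ => s ^ (α * ((j:ℝ) + 1) + (k:ℝ) - 1) * Real.exp (-(lam1 + β) * s ^ (1:ℝ)))
        (Set.Ioi 0) :=
      integrableOn_rpow_mul_exp_neg_mul_rpow (by nlinarith [hApos j]) one_pos hb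
    have h1 : IntegrableOn
        (fun s : ℝ => s ^ (α * ((j:ℝ) + 1) + (k:ℝ) - 1) * Real.exp (-((lam1 + β) * s)))
        (Set.Ioi 0) := by
      refine h0.congr_fun (fun s _ => ?_) measurableSet_Ioi
      simp only [Real.rpow_one, neg_mul]
    exact h1.const_mul (C j)
  have hval : ∀ j, ∫ s in Set.Ioi (0:ℝ), g j s =
      C j * ((1 / (lam1 + β)) ^ (α * ((j:ℝ) + 1) + (k:ℝ)) *
        Real.Gamma (α * ((j:ℝ) + 1) + (k:ℝ))) := by
    intro j
    rw [hg]
    simp only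
    rw [integral_const_mul]
    congr 1
    exact integral_rpow_mul_exp_neg_mul_Ioi (by nlinarith [hApos j]) hb
  rw [setIntegral_congr_fun measurableSet_Ioi hFeq,
    integral_tsum_eq_of_nonneg hm hnn hsum hi]
  rw [tsum_congr hval]
  have hfinal : ∀ j : ℕ,
      C j * ((1 / (lam1 + β)) ^ (α * ((j:ℝ) + 1) + (k:ℝ)) *
        Real.Gamma (α * ((j:ℝ) + 1) + (k:ℝ)))
      = (Real.exp (-(lam * t)) / (Nat.factorial k : ℝ)) * (lam1 ^ k / (lam1 + β) ^ k) *
        ((lam * t * β ^ α) ^ (j + 1) * Real.Gamma (α * ((j : ℝ) + 1) + (k : ℝ)) /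
          ((lam1 + β) ^ (α * ((j : ℝ) + 1)) * (Nat.factorial (j + 1) : ℝ) *
            Real.Gamma (α * ((j : ℝ) + 1)))) := by
    intro j
    have hsplit : (1 / (lam1 + β)) ^ (α * ((j:ℝ) + 1) + (k:ℝ)) =
        ((lam1 + β) ^ (α * ((j:ℝ) + 1)))⁻¹ * ((lam1 + β) ^ k)⁻¹ := by
      rw [Real.rpow_add (by positivity), one_div, Real.inv_rpow hb.le, Real.inv_rpow hb.le,
        Real.rpow_natCast]
    rw [hC, hsplit]
    have hG := Real.Gamma_pos_of_pos (hApos j)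
    have hbA : (0:ℝ) < (lam1 + β) ^ (α * ((j:ℝ) + 1)) := Real.rpow_pos_of_pos hb _
    have hbk : (0:ℝ) < (lam1 + β) ^ k := by positivity
    have hfac : (0:ℝ) < (Nat.factorial (j+1) : ℝ) := by positivity
    have hfack : (0:ℝ) < (Nat.factorial k : ℝ) := by positivity
    field_simp
  rw [tsum_congr hfinal, tsum_mul_left]
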